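/- arXiv:1704.00356 — 2 statements merged into one kernel-verified Lean document; each statement's English description precedes it below -/
import Mathlib

section
/- Consider the election with n = 10 voters, candidates C = {c_1,…,c_8}, target committee size k = 7, and ballots A_i = {c_i} for i = 1,…,4 and A_i = {c_5, c_6, c_7, c_8} for i = 5,…,10. Then the set of voters {5,6,7,8,9,10} is 4-cohesive, and every committee W output by some execution of HareAV (for any choice of which votes to remove at each step) satisfies |W ∩ {c_5, c_6, c_7, c_8}| ≤ 3; consequently HareAV fails EJR on this election regardless of the tie-breaking rule used. -/
open Finset

variable {C : Type*} [Fintype C] [DecidableEq C]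

/-- The voters approving candidate `c`. -/
def approvers {n : ℕ} (A : Fin n → Finset C) (c : C) : Finset (Fin n) :=
  Finset.univ.filter (fun i => c ∈ A i)

/-- The exact quota `q = n / k`. -/
def quota (n k : ℕ) : ℚ := (n : ℚ) / (k : ℚ)

/-- Remaining support of candidate `c` under vote fractions `f`. -/
def supp {n : ℕ} (A : Fin n → Finset C) (f : Fin n → ℚ) (c : C) : ℚ :=
  ∑ i ∈ approvers A c, f i

/-- The set `W_j = {w_1, …, w_j}` of the first `j` winners. -/
def Wset (w : ℕ → C) (j : ℕ) : Finset C := (Finset.Icc 1 j).image w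

/-- The candidates approved by every voter in `Ns`, i.e. `⋂_{i ∈ Ns} A i`. -/
def commonApproved {n : ℕ} (A : Fin n → Finset C) (Ns : Finset (Fin n)) : Finset C :=
  Finset.univ.filter (fun c => ∀ i ∈ Ns, c ∈ A i)

/-- `Ns` is an `ℓ`-cohesive group of voters: `|Ns| ≥ ℓ·n/k` and `|⋂_{i ∈ Ns} A i| ≥ ℓ`. -/
def Cohesive {n : ℕ} (A : Fin n → Finset C) (k ℓ : ℕ) (Ns : Finset (Fin n)) : Prop :=
  (ℓ : ℚ) * (n : ℚ) / (k : ℚ) ≤ (Ns.card : ℚ) ∧ ℓ ≤ (commonApproved A Ns).card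

/-- `W` provides proportional justified representation for `(A, k)`. -/
def ProvidesPJR {n : ℕ} (A : Fin n → Finset C) (k : ℕ) (W : Finset C) : Prop :=
  ∀ ℓ : ℕ, 1 ≤ ℓ → ℓ ≤ k → ∀ Ns : Finset (Fin n), Cohesive A k ℓ Ns →
    ℓ ≤ (W ∩ Ns.biUnion A).card

/-- `W` provides extended justified representation for `(A, k)`. -/
def ProvidesEJR {n : ℕ} (A : Fin n → Finset C) (k : ℕ) (W : Finset C) : Prop :=
  ∀ ℓ : ℕ, 1 ≤ ℓ → ℓ ≤ k → ∀ Ns : Finset (Fin n), Cohesive A k ℓ Ns →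
    ∃ i ∈ Ns, ℓ ≤ (A i ∩ W).card

/-- The set of `ℓ`'s satisfying the dissatisfaction-level fixpoint equation
`ℓ = ⌊(k/n)·|{i : c ∈ A_i ∧ |A_i ∩ W| < ℓ}|⌋`
(natural-number division `k * m / n` is exactly the floor `⌊(k/n)·m⌋`). -/
def dissatSet {n : ℕ} (A : Fin n → Finset C) (k : ℕ) (W : Finset C) (c : C) : Set ℕ :=
  {ℓ : ℕ | ℓ = k * (Finset.univ.filter (fun i => c ∈ A i ∧ (A i ∩ W).card < ℓ)).card / n}

/-- The dissatisfaction level `ℓ(c, W)`: the largest non-negative integer satisfying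
the fixpoint equation. -/
noncomputable def dissat {n : ℕ} (A : Fin n → Finset C) (k : ℕ) (W : Finset C) (c : C) : ℕ :=
  sSup (dissatSet A k W c)

/-- `ℓ_W(i, c) = max_{c' ∈ A_i \ (W ∪ {c})} ℓ(c', W)` (with `max ∅ = 0`). -/
noncomputable def dissatVoter {n : ℕ} (A : Fin n → Finset C) (k : ℕ) (W : Finset C)
    (i : Fin n) (c : C) : ℕ :=
  (A i \ insert c W).sup (dissat A k W)

/-- `ℓ_W(i) = max_{c ∈ A_i \ W} ℓ(c, W)` (with `max ∅ = 0`). -/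
noncomputable def dissatVoterAll {n : ℕ} (A : Fin n → Finset C) (k : ℕ) (W : Finset C)
    (i : Fin n) : ℕ :=
  (A i \ W).sup (dissat A k W)

/-- `g_i(c)` relative to the committee `W`. -/
noncomputable def gfun {n : ℕ} (A : Fin n → Finset C) (k : ℕ) (W : Finset C)
    (i : Fin n) (c : C) : ℚ :=
  if dissatVoter A k W i c ≤ (A i ∩ W).card then 0
  else ((dissatVoter A k W i c : ℚ) - ((A i ∩ W).card : ℚ) - 1) / (dissatVoter A k W i c : ℚ)

/-- Candidate `c ∉ W` is in a normal state (w.r.t. committee `W` and fractions `f`). -/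
def NormalState {n : ℕ} (A : Fin n → Finset C) (k : ℕ) (f : Fin n → ℚ) (W : Finset C)
    (c : C) : Prop :=
  (∀ i : Fin n, c ∈ A i → (A i ∩ W).card < dissatVoter A k W i c →
      ((dissatVoter A k W i c : ℚ) - ((A i ∩ W).card : ℚ)) / (dissatVoter A k W i c : ℚ) ≤ f i) ∧
  quota n k ≤ ∑ i ∈ approvers A c, (f i - gfun A k W i c)

/-- Candidate `c ∉ W` is in a starving state. -/
def StarvingState {n : ℕ} (A : Fin n → Finset C) (k : ℕ) (f : Fin n → ℚ) (W : Finset C)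
    (c : C) : Prop :=
  ∃ i : Fin n, c ∈ A i ∧ (A i ∩ W).card < dissatVoter A k W i c ∧
    f i < ((dissatVoter A k W i c : ℚ) - ((A i ∩ W).card : ℚ)) / (dissatVoter A k W i c : ℚ)

/-- Candidate `c ∉ W` is in an eager state. -/
def EagerState {n : ℕ} (A : Fin n → Finset C) (k : ℕ) (f : Fin n → ℚ) (W : Finset C)
    (c : C) : Prop :=
  ¬ StarvingState A k f W c ∧ quota n k ≤ supp A f c ∧
    ∑ i ∈ approvers A c, (f i - gfun A k W i c) < quota n k

/-- A run of a voting rule in the PJR-Exact family: a sequence of distinct winners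
`w 1, …, w k` together with fraction functions `f 0, …, f k` satisfying the three
defining conditions of the family. -/
structure PJRExactRun (n k : ℕ) (A : Fin n → Finset C) where
  w : ℕ → C
  f : ℕ → Fin n → ℚ
  /-- the selected candidates are pairwise distinct -/
  w_inj : ∀ j j' : ℕ, 1 ≤ j → j ≤ k → 1 ≤ j' → j' ≤ k → w j = w j' → j = j'
  /-- initially each voter has her whole vote -/
  f_zero : ∀ i, f 0 i = 1
  /-- fractions stay non-negative -/
  f_nonneg : ∀ j, 1 ≤ j → j ≤ k → ∀ i, 0 ≤ f j i
  /-- fractions never increase -/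
  f_mono : ∀ j, 1 ≤ j → j ≤ k → ∀ i, f j i ≤ f (j - 1) i
  /-- if the remaining support of the winner exceeds the quota, exactly `q` votes are removed -/
  remove_big : ∀ j, 1 ≤ j → j ≤ k → quota n k < supp A (f (j - 1)) (w j) →
    ∑ i ∈ approvers A (w j), (f (j - 1) i - f j i) = quota n k
  /-- if the remaining support of the winner is at most the quota, all of it is removed -/
  remove_small : ∀ j, 1 ≤ j → j ≤ k → supp A (f (j - 1)) (w j) ≤ quota n k →
    ∀ i, w j ∈ A i → f j i = 0
  /-- voters not approving the winner keep their fractions -/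
  f_untouched : ∀ j, 1 ≤ j → j ≤ k → ∀ i, w j ∉ A i → f j i = f (j - 1) i
  /-- if some unelected candidate has remaining support at least `q`,
  then so has the selected one -/
  greedy : ∀ j, 1 ≤ j → j ≤ k →
    (∃ c, c ∉ Wset w (j - 1) ∧ quota n k ≤ supp A (f (j - 1)) c) →
    quota n k ≤ supp A (f (j - 1)) (w j)

/-- Iteration `j` of a PJR-Exact run is normal. -/
def NormalIteration {n k : ℕ} {A : Fin n → Finset C} (R : PJRExactRun n k A) (j : ℕ) : Prop :=
  NormalState A k (R.f (j - 1)) (Wset R.w (j - 1)) (R.w j) ∧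
  ∀ i : Fin n, R.w j ∈ A i →
    (A i ∩ Wset R.w (j - 1)).card < dissatVoter A k (Wset R.w (j - 1)) i (R.w j) →
    ((dissatVoter A k (Wset R.w (j - 1)) i (R.w j) : ℚ) - ((A i ∩ Wset R.w j).card : ℚ)) /
      (dissatVoter A k (Wset R.w (j - 1)) i (R.w j) : ℚ) ≤ R.f j i

/-- An execution of HareAV: at each step a most-approved (among remaining votes)
unelected candidate is added, and then `min(⌈n/k⌉, #remaining approvers)` of the
remaining votes approving it are removed; the choices of winner (among maximizers)
and of removed votes are unconstrained. -/
structure HareAVRun (n k : ℕ) (A : Fin n → Finset C) where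
  w : ℕ → C
  /-- `S j` is the set of votes remaining after step `j` -/
  S : ℕ → Finset (Fin n)
  S_zero : S 0 = Finset.univ
  w_new : ∀ j, 1 ≤ j → j ≤ k → w j ∉ Wset w (j - 1)
  w_max : ∀ j, 1 ≤ j → j ≤ k → ∀ c : C, c ∉ Wset w (j - 1) →
    ((S (j - 1)).filter (fun i => c ∈ A i)).card ≤
      ((S (j - 1)).filter (fun i => w j ∈ A i)).card
  S_subset : ∀ j, 1 ≤ j → j ≤ k → S j ⊆ S (j - 1)
  removed_approve : ∀ j, 1 ≤ j → j ≤ k → ∀ i ∈ S (j - 1), i ∉ S j → w j ∈ A i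
  removed_card : ∀ j, 1 ≤ j → j ≤ k →
    (S (j - 1) \ S j).card =
      min (Nat.ceil ((n : ℚ) / (k : ℚ))) ((S (j - 1)).filter (fun i => w j ∈ A i)).card

/-- The ballot profile of Example 1: `n = 10`, `k = 7`, `C = {c_1, …, c_8}`,
`A_i = {c_i}` for `i = 1, …, 4` and `A_i = {c_5, c_6, c_7, c_8}` for `i = 5, …, 10`
(candidate `c_t` is represented by `t - 1 : Fin 8`, voter `i` by `i - 1 : Fin 10`). -/
def exampleA : Fin 10 → Finset (Fin 8) := fun i =>
  if h : (i : ℕ) < 4 then {⟨(i : ℕ), by omega⟩} else {4, 5, 6, 7}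

section HareAux

lemma ceil_ten_seven : Nat.ceil ((10 : ℚ) / 7) = 2 := by
  rw [Nat.ceil_eq_iff (by norm_num)]; norm_num

lemma mem_exampleA_big : ∀ c : Fin 8, 4 ≤ (c : ℕ) → ∀ i : Fin 10,
    (c ∈ exampleA i ↔ 4 ≤ (i : ℕ)) := by decide

lemma mem_exampleA_small : ∀ i : Fin 10, (i : ℕ) < 4 → ∀ c : Fin 8,
    c ∈ exampleA i → (c : ℕ) = (i : ℕ) := by decide

lemma mem_big_four : ∀ c : Fin 8, c ∈ ({4, 5, 6, 7} : Finset (Fin 8)) → 4 ≤ (c : ℕ) := by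
  decide

lemma mem_big_of_ge : ∀ c : Fin 8, 4 ≤ (c : ℕ) → c ∈ ({4, 5, 6, 7} : Finset (Fin 8)) := by
  decide

lemma self_mem_exampleA : ∀ t : Fin 8, ∀ _ : (t : ℕ) < 4,
    t ∈ exampleA ⟨(t : ℕ), by omega⟩ := by decide

lemma exampleA_big_eq : ∀ i : Fin 10, 4 ≤ (i : ℕ) →
    exampleA i = ({4, 5, 6, 7} : Finset (Fin 8)) := by decide

/-- Wset is monotone in the step index. -/
lemma Wset_mono {w : ℕ → Fin 8} {j j' : ℕ} (h : j ≤ j') : Wset w j ⊆ Wset w j' := by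
  unfold Wset
  exact Finset.image_subset_image (Finset.Icc_subset_Icc_right h)

/-- A voter whose unique candidate is never elected is never removed. -/
lemma singleton_voter_stays (E : HareAVRun 10 7 exampleA) (t : Fin 8) (ht : (t : ℕ) < 4)
    (htW : t ∉ Wset E.w 7) : ∀ j, j ≤ 7 → (⟨(t : ℕ), by omega⟩ : Fin 10) ∈ E.S j := by
  intro j
  induction j with
  | zero => intro _; rw [E.S_zero]; exact Finset.mem_univ _
  | succ m ih =>
    intro hm7
    by_contra hnot
    have hmem : (⟨(t : ℕ), by omega⟩ : Fin 10) ∈ E.S m := ih (by omega)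
    have happ : E.w (m + 1) ∈ exampleA ⟨(t : ℕ), by omega⟩ := by
      have := E.removed_approve (m + 1) (by omega) hm7 _ (by simpa using hmem)
      simpa using this hnot
    have hval : (E.w (m + 1) : ℕ) = (t : ℕ) := mem_exampleA_small _ (by simpa) _ happ
    have : E.w (m + 1) = t := Fin.ext (by simpa using hval)
    exact htW (this ▸ Finset.mem_image_of_mem _ (Finset.mem_Icc.mpr ⟨by omega, hm7⟩))

/-- Key invariant: the number of remaining big voters is `6 - 2·(# big winners so far)`. -/
lemma big_voters_invariant (E : HareAVRun 10 7 exampleA) :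
    ∀ j, j ≤ 7 → ((E.S j).filter (fun i : Fin 10 => 4 ≤ (i : ℕ))).card
      = 6 - 2 * ((Finset.Icc 1 j).filter (fun j' => 4 ≤ (E.w j' : ℕ))).card := by
  intro j
  induction j with
  | zero =>
    intro _
    rw [E.S_zero, show Finset.Icc 1 0 = (∅ : Finset ℕ) from rfl]
    simp only [Finset.filter_empty, Finset.card_empty, Nat.mul_zero, Nat.sub_zero]
    decide
  | succ m ih =>
    intro hm7
    have ihm := ih (by omega)
    have hsub : E.S (m + 1) ⊆ E.S m := by simpa using E.S_subset (m + 1) (by omega) hm7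
    have hIcc : Finset.Icc 1 (m + 1) = insert (m + 1) (Finset.Icc 1 m) := by
      exact (Finset.insert_Icc_right_eq_Icc_add_one (by omega)).symm
    have hnotin : (m + 1) ∉ Finset.Icc 1 m := by simp
    by_cases hbig : 4 ≤ (E.w (m + 1) : ℕ)
    · -- big step: exactly min 2 (remaining big voters) big voters are removed
      have hfe : (E.S m).filter (fun i => E.w (m + 1) ∈ exampleA i)
          = (E.S m).filter (fun i : Fin 10 => 4 ≤ (i : ℕ)) := by
        apply Finset.filter_congr
        intro i _
        simpa using mem_exampleA_big _ hbig i
      have hrc := E.removed_card (m + 1) (by omega) hm7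
      rw [show ((10 : ℕ) : ℚ) = 10 from by norm_num, show ((7 : ℕ) : ℚ) = 7 from by norm_num,
        ceil_ten_seven] at hrc
      simp only [Nat.add_sub_cancel] at hrc
      rw [hfe] at hrc
      -- decompose the big voters of S m
      have hdecomp : (E.S m).filter (fun i : Fin 10 => 4 ≤ (i : ℕ))
          = ((E.S (m + 1)).filter (fun i : Fin 10 => 4 ≤ (i : ℕ))) ∪ (E.S m \ E.S (m + 1)) := by
        ext i
        simp only [Finset.mem_union, Finset.mem_filter, Finset.mem_sdiff]
        constructor
        · rintro ⟨hi, hb⟩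
          by_cases h1 : i ∈ E.S (m + 1)
          · exact Or.inl ⟨h1, hb⟩
          · exact Or.inr ⟨hi, h1⟩
        · rintro (⟨h1, hb⟩ | ⟨h1, h2⟩)
          · exact ⟨hsub h1, hb⟩
          · refine ⟨h1, ?_⟩
            have happ : E.w (m + 1) ∈ exampleA i := by
              have := E.removed_approve (m + 1) (by omega) hm7 i (by simpa using h1)
              simpa using this h2
            exact (mem_exampleA_big _ hbig i).mp happ
      have hdisj : Disjoint ((E.S (m + 1)).filter (fun i : Fin 10 => 4 ≤ (i : ℕ)))
          (E.S m \ E.S (m + 1)) := by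
        rw [Finset.disjoint_left]
        intro i hi hi'
        exact (Finset.mem_sdiff.mp hi').2 (Finset.mem_filter.mp hi).1
      have hcard : ((E.S m).filter (fun i : Fin 10 => 4 ≤ (i : ℕ))).card
          = ((E.S (m + 1)).filter (fun i : Fin 10 => 4 ≤ (i : ℕ))).card + (E.S m \ E.S (m + 1)).card := by
        rw [hdecomp, Finset.card_union_of_disjoint hdisj]
      have hcount : ((Finset.Icc 1 (m + 1)).filter (fun j' => 4 ≤ (E.w j' : ℕ))).card
          = ((Finset.Icc 1 m).filter (fun j' => 4 ≤ (E.w j' : ℕ))).card + 1 := by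
        rw [hIcc, Finset.filter_insert, if_pos hbig,
          Finset.card_insert_of_notMem (fun h => hnotin (Finset.mem_filter.mp h).1)]
      rw [hcount]
      omega
    · -- singleton step: no big voter is removed
      have hfix : (E.S (m + 1)).filter (fun i : Fin 10 => 4 ≤ (i : ℕ))
          = (E.S m).filter (fun i : Fin 10 => 4 ≤ (i : ℕ)) := by
        ext i
        simp only [Finset.mem_filter]
        constructor
        · rintro ⟨hi, hb⟩; exact ⟨hsub hi, hb⟩
        · rintro ⟨hi, hb⟩
          refine ⟨?_, hb⟩
          by_contra h2
          have happ : E.w (m + 1) ∈ exampleA i := by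
            have := E.removed_approve (m + 1) (by omega) hm7 i (by simpa using hi)
            simpa using this h2
          have h4 : 4 ≤ (E.w (m + 1) : ℕ) := by
            have he := exampleA_big_eq i hb
            rw [he] at happ
            exact mem_big_four _ happ
          omega
      have hcount : ((Finset.Icc 1 (m + 1)).filter (fun j' => 4 ≤ (E.w j' : ℕ))).card
          = ((Finset.Icc 1 m).filter (fun j' => 4 ≤ (E.w j' : ℕ))).card := by
        rw [hIcc, Finset.filter_insert, if_neg hbig]
      rw [hfix, hcount, ihm]

end HareAux

/-- in Example 1 the last six voters form a 4-cohesive group, yet every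
execution of HareAV elects at most 3 of `{c_5, c_6, c_7, c_8}`; hence HareAV fails EJR
on this election regardless of tie-breaking. -/
theorem hareAV_fails_EJR :
    Cohesive exampleA 7 4 (Finset.univ.filter (fun i : Fin 10 => 4 ≤ (i : ℕ))) ∧
    ∀ E : HareAVRun 10 7 exampleA,
      (Wset E.w 7 ∩ ({4, 5, 6, 7} : Finset (Fin 8))).card ≤ 3 ∧
      ¬ ProvidesEJR exampleA 7 (Wset E.w 7) := by
  have hNs : (Finset.univ.filter (fun i : Fin 10 => 4 ≤ (i : ℕ))).card = 6 := by decide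
  have hcoh : Cohesive exampleA 7 4 (Finset.univ.filter (fun i : Fin 10 => 4 ≤ (i : ℕ))) := by
    constructor
    · rw [hNs]; norm_num
    · decide
  refine ⟨hcoh, fun E => ?_⟩
  have hbound : (Wset E.w 7 ∩ ({4, 5, 6, 7} : Finset (Fin 8))).card ≤ 3 := by
    by_contra hc
    push_neg at hc
    -- all four big candidates are elected
    have hBigW : ({4, 5, 6, 7} : Finset (Fin 8)) ⊆ Wset E.w 7 := by
      have hsub : Wset E.w 7 ∩ ({4, 5, 6, 7} : Finset (Fin 8)) ⊆ ({4, 5, 6, 7} : Finset (Fin 8)) :=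
        Finset.inter_subset_right
      have hcard4 : (({4, 5, 6, 7} : Finset (Fin 8))).card = 4 := by decide
      have heq := Finset.eq_of_subset_of_card_le hsub (by omega)
      intro c hcmem
      have : c ∈ Wset E.w 7 ∩ ({4, 5, 6, 7} : Finset (Fin 8)) := by rw [heq]; exact hcmem
      exact (Finset.mem_inter.mp this).1
    have hW7 : (Wset E.w 7).card ≤ 7 :=
      le_trans Finset.card_image_le (by simp)
    -- some small candidate is never elected
    have hex : ∃ t : Fin 8, (t : ℕ) < 4 ∧ t ∉ Wset E.w 7 := by
      by_contra hno
      push_neg at hno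
      have huniv : (Finset.univ : Finset (Fin 8)) ⊆ Wset E.w 7 := by
        intro c _
        by_cases h : (c : ℕ) < 4
        · exact hno c h
        · exact hBigW (mem_big_of_ge c (by omega))
      have := Finset.card_le_card huniv
      rw [Finset.card_univ] at this
      simp only [Fintype.card_fin] at this
      omega
    obtain ⟨t, ht4, htW⟩ := hex
    -- at least 4 steps elect big candidates
    set J := (Finset.Icc 1 7).filter (fun j => 4 ≤ (E.w j : ℕ)) with hJdef
    have hJ4 : 4 ≤ J.card := by
      have himg : ({4, 5, 6, 7} : Finset (Fin 8)) ⊆ J.image E.w := by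
        intro c hcmem
        obtain ⟨j, hj, hwj⟩ := Finset.mem_image.mp (hBigW hcmem)
        refine Finset.mem_image.mpr ⟨j, ?_, hwj⟩
        exact Finset.mem_filter.mpr ⟨hj, by rw [hwj]; exact mem_big_four c hcmem⟩
      calc 4 = (({4, 5, 6, 7} : Finset (Fin 8))).card := by decide
        _ ≤ (J.image E.w).card := Finset.card_le_card himg
        _ ≤ J.card := Finset.card_image_le
    have hJne : J.Nonempty := Finset.card_pos.mp (by omega)
    set j4 := J.max' hJne with hj4def
    have hj4J : j4 ∈ J := J.max'_mem hJne
    have hj4Icc := (Finset.mem_filter.mp hj4J).1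
    have hj4big : 4 ≤ (E.w j4 : ℕ) := (Finset.mem_filter.mp hj4J).2
    have hj41 : 1 ≤ j4 := (Finset.mem_Icc.mp hj4Icc).1
    have hj47 : j4 ≤ 7 := (Finset.mem_Icc.mp hj4Icc).2
    -- at least 3 big steps strictly before j4
    have herase : J.erase j4 ⊆ (Finset.Icc 1 (j4 - 1)).filter (fun j => 4 ≤ (E.w j : ℕ)) := by
      intro j hj
      obtain ⟨hne, hjJ⟩ := Finset.mem_erase.mp hj
      have hjle : j ≤ j4 := J.le_max' j hjJ
      obtain ⟨hIcc, hbig⟩ := Finset.mem_filter.mp hjJ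
      have h1 := (Finset.mem_Icc.mp hIcc).1
      exact Finset.mem_filter.mpr ⟨Finset.mem_Icc.mpr ⟨h1, by omega⟩, hbig⟩
    have hc3 : 3 ≤ ((Finset.Icc 1 (j4 - 1)).filter (fun j => 4 ≤ (E.w j : ℕ))).card := by
      have := Finset.card_le_card herase
      rw [Finset.card_erase_of_mem hj4J] at this
      omega
    -- no big voters remain before step j4
    have hinv := big_voters_invariant E (j4 - 1) (by omega)
    have hzero : ((E.S (j4 - 1)).filter (fun i : Fin 10 => 4 ≤ (i : ℕ))).card = 0 := by omega
    -- but voter t is still present and approves the unelected candidate t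
    have hstay := singleton_voter_stays E t ht4 htW (j4 - 1) (by omega)
    have htnotW : t ∉ Wset E.w (j4 - 1) := fun h => htW (Wset_mono (by omega) h)
    have hmax := E.w_max j4 hj41 hj47 t htnotW
    have hfe : (E.S (j4 - 1)).filter (fun i => E.w j4 ∈ exampleA i)
        = (E.S (j4 - 1)).filter (fun i : Fin 10 => 4 ≤ (i : ℕ)) := by
      apply Finset.filter_congr
      intro i _
      simpa using mem_exampleA_big _ hj4big i
    rw [hfe, hzero] at hmax
    have hpos : 0 < ((E.S (j4 - 1)).filter (fun i => t ∈ exampleA i)).card := by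
      apply Finset.card_pos.mpr
      exact ⟨⟨(t : ℕ), by omega⟩, Finset.mem_filter.mpr ⟨hstay, self_mem_exampleA t ht4⟩⟩
    omega
  refine ⟨hbound, fun hEJR => ?_⟩
  obtain ⟨i, hi, hic⟩ := hEJR 4 (by norm_num) (by norm_num) _ hcoh
  have hi4 : 4 ≤ (i : ℕ) := (Finset.mem_filter.mp hi).2
  rw [exampleA_big_eq i hi4, Finset.inter_comm] at hic
  omega
end

section
/- For every ballot profile A = (A_1,…,A_n) over a candidate set C and every target committee size k with 1 ≤ k ≤ |C|, there exists a committee W ⊆ C with |W| = k that provides extended justified representation (EJR). -/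
open Finset

variable {C : Type*} [Fintype C] [DecidableEq C]

/-! ### Auxiliary machinery: PAV and its EJR proof -/

/-- The harmonic number `H t = 1 + 1/2 + ⋯ + 1/t`. -/
def pavH (t : ℕ) : ℚ := ∑ j ∈ Finset.range t, 1 / ((j : ℚ) + 1)

/-- The PAV score of a committee. -/
def pavScore {n : ℕ} (A : Fin n → Finset C) (W : Finset C) : ℚ :=
  ∑ i : Fin n, pavH ((A i ∩ W).card)

lemma pavH_succ (t : ℕ) : pavH (t + 1) = pavH t + 1 / ((t : ℚ) + 1) := by
  simp [pavH, Finset.sum_range_succ]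

lemma pavScore_insert {n : ℕ} (A : Fin n → Finset C) (W : Finset C) (c : C) (hc : c ∉ W) :
    pavScore A (insert c W) =
      pavScore A W + ∑ i ∈ approvers A c, 1 / (((A i ∩ W).card : ℚ) + 1) := by
  unfold pavScore
  rw [approvers, Finset.sum_filter, ← Finset.sum_add_distrib]
  refine Finset.sum_congr rfl fun i _ => ?_
  by_cases h : c ∈ A i
  · have h1 : A i ∩ insert c W = insert c (A i ∩ W) := Finset.inter_insert_of_mem h
    have h2 : c ∉ A i ∩ W := by simp [hc]
    rw [h1, Finset.card_insert_of_notMem h2, pavH_succ]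
    simp [h]
  · have h1 : A i ∩ insert c W = A i ∩ W := Finset.inter_insert_of_notMem h
    rw [h1]; simp [h]

lemma pavScore_erase {n : ℕ} (A : Fin n → Finset C) (W : Finset C) (c : C) (hc : c ∈ W) :
    pavScore A W =
      pavScore A (W.erase c) + ∑ i ∈ approvers A c, 1 / (((A i ∩ W).card : ℚ)) := by
  have h := pavScore_insert A (W.erase c) c (Finset.notMem_erase c W)
  rw [Finset.insert_erase hc] at h
  rw [h]
  congr 1
  refine Finset.sum_congr rfl fun i hi => ?_
  have hci : c ∈ A i := by simpa [approvers] using hi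
  have h1 : A i ∩ W.erase c = (A i ∩ W).erase c := by
    ext x; simp only [Finset.mem_inter, Finset.mem_erase]; tauto
  have h2 : c ∈ A i ∩ W := Finset.mem_inter.2 ⟨hci, hc⟩
  rw [h1, Finset.card_erase_of_mem h2]
  have h3 : 1 ≤ (A i ∩ W).card := Finset.card_pos.2 ⟨c, h2⟩
  have : (((A i ∩ W).card - 1 : ℕ) : ℚ) = ((A i ∩ W).card : ℚ) - 1 := by
    push_cast [h3]; ring
  rw [this]; ring_nf

/-- for every ballot profile and every target committee size there exists
a committee of that size providing EJR. -/
theorem exists_EJR_committee {C : Type*} [Fintype C] [DecidableEq C] {n : ℕ}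
    (hn : 0 < n) (A : Fin n → Finset C) (k : ℕ) (hk : 1 ≤ k) (hkC : k ≤ Fintype.card C) :
    ∃ W : Finset C, W.card = k ∧ ProvidesEJR A k W := by
  classical
  -- take a PAV-score-maximizing committee
  set S : Finset (Finset C) := Finset.powersetCard k (Finset.univ : Finset C) with hS
  have hSne : S.Nonempty := by
    obtain ⟨B, hBsub, hBcard⟩ :=
      Finset.exists_subset_card_eq (s := (Finset.univ : Finset C)) (by simpa using hkC)
    exact ⟨B, Finset.mem_powersetCard.2 ⟨hBsub, hBcard⟩⟩
  obtain ⟨W, hWS, hWmax⟩ := Finset.exists_max_image S (pavScore A) hSne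
  have hWcard : W.card = k := (Finset.mem_powersetCard.1 hWS).2
  refine ⟨W, hWcard, ?_⟩
  intro ℓ hℓ1 hℓk Ns hcoh
  by_contra hcon
  push_neg at hcon
  have hsmall : ∀ i ∈ Ns, (A i ∩ W).card < ℓ := fun i hi => hcon i hi
  have hkpos : (0 : ℚ) < (k : ℚ) := by exact_mod_cast hk
  have hnpos : (0 : ℚ) < (n : ℚ) := by exact_mod_cast hn
  have hℓpos : (0 : ℚ) < (ℓ : ℚ) := by exact_mod_cast hℓ1
  have hNscard : (ℓ : ℚ) * (n : ℚ) / (k : ℚ) ≤ (Ns.card : ℚ) := hcoh.1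
  have hNspos : (0 : ℚ) < (Ns.card : ℚ) := lt_of_lt_of_le (by positivity) hNscard
  have hNsne : Ns.Nonempty := Finset.card_pos.1 (by exact_mod_cast hNspos)
  obtain ⟨i₀, hi₀⟩ := hNsne
  -- there is a commonly approved candidate outside W
  have hCA : ∀ x ∈ commonApproved A Ns, ∀ i ∈ Ns, x ∈ A i := by
    intro x hx; simpa [commonApproved] using hx
  have hnotsub : ¬ commonApproved A Ns ⊆ W := by
    intro hsub
    have h1 : commonApproved A Ns ⊆ A i₀ ∩ W :=
      fun x hx => Finset.mem_inter.2 ⟨hCA x hx i₀ hi₀, hsub hx⟩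
    have h2 := Finset.card_le_card h1
    have h3 := hcoh.2
    have h4 := hsmall i₀ hi₀
    omega
  obtain ⟨c, hcCA, hcW⟩ := Finset.not_subset.1 hnotsub
  have hcA : ∀ i ∈ Ns, c ∈ A i := hCA c hcCA
  set W' : Finset C := insert c W with hW'
  -- the gain of adding c is at least n/k
  have hgain : (n : ℚ) / (k : ℚ) ≤ ∑ i ∈ approvers A c, 1 / (((A i ∩ W).card : ℚ) + 1) := by
    have hsub : Ns ⊆ approvers A c := fun i hi => by simp [approvers, hcA i hi]
    have h1 : (Ns.card : ℚ) * (1 / (ℓ : ℚ)) ≤ ∑ i ∈ Ns, 1 / (((A i ∩ W).card : ℚ) + 1) := by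
      calc (Ns.card : ℚ) * (1 / (ℓ : ℚ)) = ∑ _i ∈ Ns, (1 / (ℓ : ℚ)) := by
            rw [Finset.sum_const, nsmul_eq_mul]
        _ ≤ ∑ i ∈ Ns, 1 / (((A i ∩ W).card : ℚ) + 1) := by
            refine Finset.sum_le_sum fun i hi => ?_
            have h2 : ((A i ∩ W).card : ℚ) + 1 ≤ (ℓ : ℚ) := by
              exact_mod_cast Nat.succ_le_of_lt (hsmall i hi)
            exact one_div_le_one_div_of_le (by positivity) h2
    have h3 : ∑ i ∈ Ns, 1 / (((A i ∩ W).card : ℚ) + 1) ≤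
        ∑ i ∈ approvers A c, 1 / (((A i ∩ W).card : ℚ) + 1) :=
      Finset.sum_le_sum_of_subset_of_nonneg hsub (fun i _ _ => by positivity)
    have h4 : (n : ℚ) / (k : ℚ) ≤ (Ns.card : ℚ) * (1 / (ℓ : ℚ)) := by
      rw [mul_one_div, le_div_iff₀ hℓpos]
      calc (n : ℚ) / k * ℓ = (ℓ : ℚ) * n / k := by ring
        _ ≤ (Ns.card : ℚ) := hNscard
    linarith
  -- the total loss over W is at most n - n/k
  have hlosses : ∑ c' ∈ W, ∑ i ∈ approvers A c', 1 / (((A i ∩ W').card : ℚ)) ≤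
      (n : ℚ) - (n : ℚ) / (k : ℚ) := by
    have hswap : ∑ c' ∈ W, ∑ i ∈ approvers A c', 1 / (((A i ∩ W').card : ℚ)) =
        ∑ i : Fin n, ((A i ∩ W).card : ℚ) / ((A i ∩ W').card : ℚ) := by
      have h1 : ∀ c' ∈ W, ∑ i ∈ approvers A c', 1 / (((A i ∩ W').card : ℚ)) =
          ∑ i : Fin n, if c' ∈ A i then 1 / (((A i ∩ W').card : ℚ)) else 0 := by
        intro c' _; rw [approvers, Finset.sum_filter]
      rw [Finset.sum_congr rfl h1, Finset.sum_comm]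
      refine Finset.sum_congr rfl fun i _ => ?_
      have h2 : (∑ c' ∈ W, if c' ∈ A i then 1 / (((A i ∩ W').card : ℚ)) else 0) =
          ∑ c' ∈ W ∩ A i, 1 / (((A i ∩ W').card : ℚ)) := by
        rw [Finset.sum_ite_mem]
      rw [h2, Finset.sum_const, nsmul_eq_mul, Finset.inter_comm W (A i)]
      rw [mul_one_div]
    rw [hswap]
    have hterm : ∀ i : Fin n,
        ((A i ∩ W).card : ℚ) / ((A i ∩ W').card : ℚ) ≤
          1 - (if i ∈ Ns then 1 / (ℓ : ℚ) else 0) := by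
      intro i
      by_cases hi : i ∈ Ns
      · have hci : c ∈ A i := hcA i hi
        have he : A i ∩ W' = insert c (A i ∩ W) := Finset.inter_insert_of_mem hci
        have hcnm : c ∉ A i ∩ W := fun h => hcW (Finset.mem_inter.1 h).2
        rw [he, Finset.card_insert_of_notMem hcnm]
        set m := (A i ∩ W).card with hm
        have hmℓ : (m : ℚ) + 1 ≤ (ℓ : ℚ) := by
          exact_mod_cast Nat.succ_le_of_lt (hsmall i hi)
        have hmpos : (0 : ℚ) < (m : ℚ) + 1 := by positivity
        simp only [hi, if_pos]
        have hcast : ((m + 1 : ℕ) : ℚ) = (m : ℚ) + 1 := by push_cast; ring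
        rw [hcast]
        rw [div_le_iff₀ hmpos]
        have h5 : 1 / (ℓ : ℚ) ≤ 1 / ((m : ℚ) + 1) :=
          one_div_le_one_div_of_le hmpos hmℓ
        have h6 : (1 - 1 / (ℓ : ℚ)) * ((m : ℚ) + 1) = (m : ℚ) + 1 - ((m : ℚ) + 1) / ℓ := by
          ring
        rw [h6]
        have h8 : ((m : ℚ) + 1) / ℓ ≤ 1 := by
          rw [div_le_one hℓpos]; exact hmℓ
        linarith
      · simp only [hi, if_neg, not_false_iff, sub_zero]
        by_cases hz : (A i ∩ W').card = 0
        · have : (A i ∩ W).card = 0 := by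
            have := Finset.card_le_card (show A i ∩ W ⊆ A i ∩ W' from
              Finset.inter_subset_inter (Finset.Subset.refl (A i)) (Finset.subset_insert c W))
            omega
          simp [this]
        · have hpos : (0 : ℚ) < ((A i ∩ W').card : ℚ) := by
            have : 0 < (A i ∩ W').card := Nat.pos_of_ne_zero hz
            exact_mod_cast this
          rw [div_le_one hpos]
          exact_mod_cast Finset.card_le_card (show A i ∩ W ⊆ A i ∩ W' from
            Finset.inter_subset_inter (Finset.Subset.refl (A i)) (Finset.subset_insert c W))
    calc ∑ i : Fin n, ((A i ∩ W).card : ℚ) / ((A i ∩ W').card : ℚ)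
        ≤ ∑ i : Fin n, (1 - (if i ∈ Ns then 1 / (ℓ : ℚ) else 0)) :=
          Finset.sum_le_sum fun i _ => hterm i
      _ = (n : ℚ) - (Ns.card : ℚ) * (1 / (ℓ : ℚ)) := by
          rw [Finset.sum_sub_distrib, Finset.sum_const]
          simp only [Finset.card_univ, Fintype.card_fin, nsmul_eq_mul, mul_one]
          congr 1
          rw [← Finset.sum_filter]
          have : Finset.univ.filter (fun i : Fin n => i ∈ Ns) = Ns := by
            ext i; simp
          rw [this, Finset.sum_const, nsmul_eq_mul]
      _ ≤ (n : ℚ) - (n : ℚ) / (k : ℚ) := by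
          have h4 : (n : ℚ) / (k : ℚ) ≤ (Ns.card : ℚ) * (1 / (ℓ : ℚ)) := by
            rw [mul_one_div, le_div_iff₀ hℓpos]
            calc (n : ℚ) / k * ℓ = (ℓ : ℚ) * n / k := by ring
              _ ≤ (Ns.card : ℚ) := hNscard
          linarith
  -- some winner has small loss
  have hWne : W.Nonempty := Finset.card_pos.1 (by omega)
  have havg : ∃ c' ∈ W, ∑ i ∈ approvers A c', 1 / (((A i ∩ W').card : ℚ)) ≤
      ((n : ℚ) - (n : ℚ) / (k : ℚ)) / (k : ℚ) := by
    apply Finset.exists_le_of_sum_le hWne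
    rw [Finset.sum_const, hWcard, nsmul_eq_mul]
    rw [mul_div_cancel₀ _ (ne_of_gt hkpos)]
    exact hlosses
  obtain ⟨c', hc'W, hc'loss⟩ := havg
  -- the swap committee beats W, contradiction
  have hc'W' : c' ∈ W' := Finset.mem_insert_of_mem hc'W
  have hscore1 : pavScore A W' =
      pavScore A W + ∑ i ∈ approvers A c, 1 / (((A i ∩ W).card : ℚ) + 1) :=
    pavScore_insert A W c hcW
  have hscore2 : pavScore A W' = pavScore A (W'.erase c') +
      ∑ i ∈ approvers A c', 1 / (((A i ∩ W').card : ℚ)) :=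
    pavScore_erase A W' c' hc'W'
  have hcard' : (W'.erase c').card = k := by
    rw [Finset.card_erase_of_mem hc'W', hW', Finset.card_insert_of_notMem hcW, hWcard]
    omega
  have hmem' : W'.erase c' ∈ S :=
    Finset.mem_powersetCard.2 ⟨Finset.subset_univ _, hcard'⟩
  have hle := hWmax _ hmem'
  have hstrict : ((n : ℚ) - (n : ℚ) / (k : ℚ)) / (k : ℚ) < (n : ℚ) / (k : ℚ) := by
    rw [div_lt_div_iff₀ hkpos hkpos]
    have hq : (0 : ℚ) < (n : ℚ) / (k : ℚ) := by positivity
    nlinarith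
  linarith
end
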